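/- Let y : [0,T] → ℝ be a nonnegative absolutely continuous function and h ∈ L¹(0,T) nonnegative, with y'(t) ≤ C(1 + h(t))·y(t) for a.e. t. Then (d/dt) ln(1 + ln⁺ y(t)) ≤ C(1 + h(t))/(1 + ln⁺ y(t)) whenever y(t) > 1, and consequently ln(1 + ln⁺ y(t)) ≤ ln(1 + ln⁺ y(0)) + C ∫₀ᵗ (1 + h(s))/(1 + ln⁺ y(s)) ds. -/

import Mathlib

open MeasureTheory Set Filter

private lemma lnplus_eq {x : ℝ} (hx : 0 ≤ x) :
    max (Real.log x) 0 = Real.log (max x 1) := by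
  rcases le_or_gt x 1 with h | h
  · rw [max_eq_right h, Real.log_one, max_eq_right (Real.log_nonpos hx h)]
  · rw [max_eq_left h.le, max_eq_left (Real.log_nonneg h.le)]

private noncomputable def gfun (y : ℝ → ℝ) (s : ℝ) : ℝ :=
  Real.log (1 + max (Real.log (y s)) 0)

private noncomputable def gder (y y' : ℝ → ℝ) (x : ℝ) : ℝ :=
  if 1 < y x then y' x / y x / (1 + Real.log (y x))
  else if y x = 1 then max (y' x) 0 else 0

private lemma gzero {y : ℝ → ℝ} {s : ℝ} (h0 : 0 ≤ y s) (h1 : y s ≤ 1) :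
    gfun y s = 0 := by
  rw [gfun, max_eq_right (Real.log_nonpos h0 h1), add_zero, Real.log_one]

private lemma gnonneg (y : ℝ → ℝ) (s : ℝ) : 0 ≤ gfun y s :=
  Real.log_nonneg (le_add_of_nonneg_right (le_max_right _ _))

private lemma hasDerivAt_loglog {y y' : ℝ → ℝ} (hy : ∀ s, HasDerivAt y (y' s) s) {t : ℝ}
    (h0 : 0 < y t) (h1 : 0 < 1 + Real.log (y t)) :
    HasDerivAt (fun s => Real.log (1 + Real.log (y s))) (y' t / y t / (1 + Real.log (y t))) t := by
  have hl : HasDerivAt (fun s => Real.log (y s)) (y' t / y t) t := (hy t).log (ne_of_gt h0)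
  have h2 : HasDerivAt (fun s => 1 + Real.log (y s)) (y' t / y t) t := hl.const_add 1
  exact h2.log (ne_of_gt h1)

private lemma hasDerivAt_g {y y' : ℝ → ℝ} (hy : ∀ s, HasDerivAt y (y' s) s) {t : ℝ}
    (ht : 1 < y t) :
    HasDerivAt (gfun y) (y' t / y t / (1 + Real.log (y t))) t := by
  have hpos : 0 < y t := lt_trans one_pos ht
  have hD : 0 < 1 + Real.log (y t) := by
    have := Real.log_pos ht; linarith
  refine (hasDerivAt_loglog hy hpos hD).congr_of_eventuallyEq ?_
  have hlt : ∀ᶠ s in nhds t, 1 < y s := (hy t).continuousAt.eventually (eventually_gt_nhds ht)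
  filter_upwards [hlt] with s hs
  rw [gfun, max_eq_left (Real.log_pos hs).le]

private lemma gderiv {T : ℝ} {y y' : ℝ → ℝ} (hy : ∀ s, HasDerivAt y (y' s) s)
    (hynn : ∀ t ∈ Set.Icc 0 T, 0 ≤ y t) {t₀ x : ℝ} (ht₀ : t₀ ≤ T) (hx : x ∈ Set.Ioo (0:ℝ) t₀) :
    HasDerivWithinAt (gfun y) (gder y y' x) (Set.Ioi x) x := by
  have hxIcc : x ∈ Set.Icc (0:ℝ) T := ⟨hx.1.le, hx.2.le.trans ht₀⟩
  have hyx0 : 0 ≤ y x := hynn x hxIcc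
  have hmem : ∀ᶠ s in nhdsWithin x (Set.Ioi x), s ∈ Set.Icc (0:ℝ) T := by
    filter_upwards [Ioo_mem_nhdsGT_of_mem (⟨le_refl x, hx.2⟩ : x ∈ Set.Ico x t₀)] with s hs
    exact ⟨(hx.1.trans hs.1).le, hs.2.le.trans ht₀⟩
  rcases lt_trichotomy (y x) 1 with hlt | heq | hgt
  · -- y x < 1
    have hev : ∀ᶠ s in nhdsWithin x (Set.Ioi x), gfun y s = 0 := by
      have h1 : ∀ᶠ s in nhdsWithin x (Set.Ioi x), y s < 1 :=
        (((hy x).continuousAt.eventually (eventually_lt_nhds hlt)).filter_mono nhdsWithin_le_nhds)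
      filter_upwards [h1, hmem] with s hs1 hs2
      exact gzero (hynn s hs2) hs1.le
    have key : HasDerivWithinAt (gfun y) 0 (Set.Ioi x) x :=
      (hasDerivWithinAt_const x _ 0).congr_of_eventuallyEq hev (gzero hyx0 hlt.le)
    have hval : gder y y' x = 0 := by
      rw [gder, if_neg (by linarith), if_neg hlt.ne]
    rw [hval]; exact key
  · -- y x = 1
    have T1 : Tendsto (slope y x) (nhdsWithin x (Set.Ioi x)) (nhds (y' x)) :=
      (hasDerivAt_iff_tendsto_slope.1 (hy x)).mono_left
        (nhdsWithin_mono x fun s hs => ne_of_gt hs)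
    rcases lt_trichotomy (y' x) 0 with hv | hv | hv
    · -- y' x < 0
      have h1 : ∀ᶠ s in nhdsWithin x (Set.Ioi x), slope y x s < 0 :=
        T1.eventually (eventually_lt_nhds hv)
      have hev : ∀ᶠ s in nhdsWithin x (Set.Ioi x), gfun y s = 0 := by
        filter_upwards [h1, hmem, self_mem_nhdsWithin] with s hs1 hs2 hs3
        have hsx : 0 < s - x := sub_pos.2 hs3
        rw [slope_def_field] at hs1
        have h4 : y s - y x < 0 * (s - x) := (div_lt_iff₀ hsx).1 hs1
        have hlt1 : y s ≤ 1 := by rw [heq] at h4; linarith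
        exact gzero (hynn s hs2) hlt1
      have key : HasDerivWithinAt (gfun y) 0 (Set.Ioi x) x :=
        (hasDerivWithinAt_const x _ 0).congr_of_eventuallyEq hev (gzero hyx0 heq.le)
      have hval : gder y y' x = 0 := by
        rw [gder, if_neg (by rw [heq]; exact lt_irrefl 1), if_pos heq, max_eq_right hv.le]
      rw [hval]; exact key
    · -- y' x = 0 : squeeze
      have key : HasDerivWithinAt (gfun y) 0 (Set.Ioi x) x := by
        have hset : Set.Ioi x \ {x} = Set.Ioi x :=
          Set.diff_singleton_eq_self (fun hh => lt_irrefl x (Set.mem_Ioi.1 hh))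
        rw [hasDerivWithinAt_iff_tendsto_slope, hset]
        have hgx : gfun y x = 0 := gzero hyx0 heq.le
        have hub : ∀ᶠ s in nhdsWithin x (Set.Ioi x),
            slope (gfun y) x s ≤ |slope y x s| := by
          filter_upwards [hmem, self_mem_nhdsWithin] with s hs2 hs3
          have hsx : 0 < s - x := sub_pos.2 hs3
          have hgs : gfun y s ≤ |y s - y x| := by
            rcases le_or_gt (y s) 1 with hc | hc
            · rw [gzero (hynn s hs2) hc]; positivity
            · have hpos : 0 < y s := lt_trans one_pos hc
              have l1 : Real.log (y s) ≤ y s - 1 := Real.log_le_sub_one_of_pos hpos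
              have l0 : 0 < Real.log (y s) := Real.log_pos hc
              have e1 : gfun y s = Real.log (1 + Real.log (y s)) := by
                rw [gfun, max_eq_left l0.le]
              have l2 : Real.log (1 + Real.log (y s)) ≤ Real.log (y s) := by
                have := Real.log_le_sub_one_of_pos (by linarith : (0:ℝ) < 1 + Real.log (y s))
                linarith
              have e2 : |y s - y x| = y s - 1 := by
                rw [heq, abs_of_pos (by linarith)]
              rw [e1, e2]; linarith
          rw [slope_def_field, slope_def_field, hgx, sub_zero, abs_div,
            abs_of_pos hsx]
          gcongr
        have hlb : ∀ᶠ s in nhdsWithin x (Set.Ioi x), 0 ≤ slope (gfun y) x s := by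
          filter_upwards [self_mem_nhdsWithin] with s hs3
          have hsx : 0 < s - x := sub_pos.2 hs3
          rw [slope_def_field, hgx, sub_zero]
          have := gnonneg y s
          positivity
        have habs : Tendsto (fun s => |slope y x s|) (nhdsWithin x (Set.Ioi x)) (nhds 0) := by
          have h2 := T1.abs
          rw [hv, abs_zero] at h2
          exact h2
        exact tendsto_of_tendsto_of_tendsto_of_le_of_le' tendsto_const_nhds habs hlb hub
      have hval : gder y y' x = 0 := by
        rw [gder, if_neg (by rw [heq]; exact lt_irrefl 1), if_pos heq, hv, max_self]
      rw [hval]; exact key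
    · -- y' x > 0
      have h1 : ∀ᶠ s in nhdsWithin x (Set.Ioi x), 0 < slope y x s :=
        T1.eventually (eventually_gt_nhds hv)
      have hev : ∀ᶠ s in nhdsWithin x (Set.Ioi x), 1 < y s := by
        filter_upwards [h1, self_mem_nhdsWithin] with s hs1 hs3
        have hsx : 0 < s - x := sub_pos.2 hs3
        rw [slope_def_field] at hs1
        have h4 : 0 * (s - x) < y s - y x := (lt_div_iff₀ hsx).1 hs1
        rw [heq] at h4; linarith
      have hd : HasDerivAt (fun s => Real.log (1 + Real.log (y s)))
          (y' x / y x / (1 + Real.log (y x))) x :=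
        hasDerivAt_loglog hy (by rw [heq]; exact one_pos)
          (by rw [heq, Real.log_one]; norm_num)
      have key : HasDerivWithinAt (gfun y) (y' x / y x / (1 + Real.log (y x)))
          (Set.Ioi x) x := by
        refine hd.hasDerivWithinAt.congr_of_eventuallyEq ?_ ?_
        · filter_upwards [hev] with s hs
          rw [gfun, max_eq_left (Real.log_pos hs).le]
        · rw [gzero hyx0 heq.le, heq, Real.log_one, add_zero, Real.log_one]
      have hval : gder y y' x = y' x / y x / (1 + Real.log (y x)) := by
        rw [gder, if_neg (by rw [heq]; exact lt_irrefl 1), if_pos heq, heq, Real.log_one,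
          max_eq_left hv.le]
        ring
      rw [hval]; exact key
  · -- 1 < y x
    have hval : gder y y' x = y' x / y x / (1 + Real.log (y x)) := by
      rw [gder, if_pos hgt]
    rw [hval]
    exact (hasDerivAt_g hy hgt).hasDerivWithinAt

theorem stmt_13 (T C : ℝ) (hT : 0 < T) (hC : 0 < C)
    (y y' h : ℝ → ℝ)
    (hy : ∀ t, HasDerivAt y (y' t) t)
    (hynn : ∀ t ∈ Set.Icc 0 T, 0 ≤ y t)
    (hh : IntegrableOn h (Set.Ioo 0 T)) (hhnn : ∀ t, 0 ≤ h t)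
    (hbound : ∀ᵐ t ∂(volume.restrict (Set.Ioo 0 T)), y' t ≤ C * (1 + h t) * y t) :
    (∀ᵐ t ∂(volume.restrict (Set.Ioo 0 T)), 1 < y t →
        deriv (fun s => Real.log (1 + max (Real.log (y s)) 0)) t ≤
          C * (1 + h t) / (1 + max (Real.log (y t)) 0)) ∧
      ∀ t ∈ Set.Icc 0 T,
        Real.log (1 + max (Real.log (y t)) 0) ≤
          Real.log (1 + max (Real.log (y 0)) 0) +
            C * ∫ s in (0 : ℝ)..t, (1 + h s) / (1 + max (Real.log (y s)) 0) := by
  constructor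
  · -- part 1
    filter_upwards [hbound] with t hb ht
    have hd : HasDerivAt (fun s => Real.log (1 + max (Real.log (y s)) 0))
        (y' t / y t / (1 + Real.log (y t))) t := hasDerivAt_g hy ht
    rw [hd.deriv]
    have hpos : 0 < y t := lt_trans one_pos ht
    have hlog : 0 < Real.log (y t) := Real.log_pos ht
    have hD : 0 < 1 + Real.log (y t) := by linarith
    rw [max_eq_left hlog.le, div_div, div_le_div_iff₀ (by positivity) hD]
    nlinarith [mul_le_mul_of_nonneg_right hb hD.le]
  · -- part 2
    intro t₀ ht₀
    have hsub : Set.Icc (0:ℝ) t₀ ⊆ Set.Icc 0 T := Set.Icc_subset_Icc le_rfl ht₀.2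
    set A : ℝ → ℝ := fun s => 1 + Real.log (max (y s) 1) with hA
    set φ : ℝ → ℝ := fun x => max (gder y y' x) (C * ((1 + h x) / A x)) with hφ
    have hA1 : ∀ s, (1:ℝ) ≤ A s := fun s =>
      le_add_of_nonneg_right (Real.log_nonneg (le_max_right _ _))
    have hyc : Continuous y := continuous_iff_continuousAt.2 fun s => (hy s).continuousAt
    have hAcont : Continuous A := by
      refine continuous_const.add ?_
      refine continuous_iff_continuousAt.2 fun s => ?_
      have hlc : ContinuousAt Real.log (max (y s) 1) :=
        Real.continuousAt_log (ne_of_gt (lt_of_lt_of_le one_pos (le_max_right (y s) 1)))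
      have hm : ContinuousAt (fun b => max (y b) 1) s :=
        (hyc.max continuous_const).continuousAt
      exact ContinuousAt.comp (f := fun b => max (y b) 1) (x := s) hlc hm
    -- continuity of gfun on Icc 0 t₀
    have hcont : ContinuousOn (gfun y) (Set.Icc 0 t₀) := by
      have hc2 : Continuous (fun s => Real.log (A s)) := by
        refine continuous_iff_continuousAt.2 fun s => ?_
        have hlc : ContinuousAt Real.log (A s) :=
          Real.continuousAt_log (by linarith [hA1 s])
        have hm : ContinuousAt A s := hAcont.continuousAt
        exact ContinuousAt.comp (f := A) (x := s) hlc hm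
      refine hc2.continuousOn.congr fun s hs => ?_
      rw [gfun, lnplus_eq (hynn s (hsub hs))]
    -- derivative
    have hderiv : ∀ x ∈ Set.Ioo (0:ℝ) t₀,
        HasDerivWithinAt (gfun y) (gder y y' x) (Set.Ioi x) x :=
      fun x hx => gderiv hy hynn ht₀.2 hx
    -- integrability of the majorant
    have hhIcc : IntegrableOn h (Set.Icc 0 t₀) :=
      (hh.mono_set (Set.Ioo_subset_Ioo le_rfl ht₀.2)).congr_set_ae Ioo_ae_eq_Icc.symm
    have h1int : IntegrableOn (fun x => C * (1 + h x)) (Set.Icc 0 t₀) :=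
      ((integrableOn_const (C := (1:ℝ)) measure_Icc_lt_top.ne).add hhIcc).const_mul C
    have hintCw : IntegrableOn (fun x => C * ((1 + h x) / A x)) (Set.Icc 0 t₀) := by
      refine Integrable.mono' h1int ?_ ?_
      · have hm1 : AEMeasurable (fun x => 1 + h x) (volume.restrict (Set.Icc 0 t₀)) :=
          aemeasurable_const.add hhIcc.aemeasurable
        have hm2 : AEMeasurable A (volume.restrict (Set.Icc 0 t₀)) :=
          hAcont.measurable.aemeasurable
        exact ((hm1.div hm2).const_mul C).aestronglyMeasurable
      · refine Eventually.of_forall fun x => ?_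
        have h1 : 0 < A x := lt_of_lt_of_le one_pos (hA1 x)
        have h2 : (0:ℝ) ≤ 1 + h x := by linarith [hhnn x]
        rw [Real.norm_eq_abs, abs_of_nonneg (by positivity)]
        exact mul_le_mul_of_nonneg_left (div_le_self h2 (hA1 x)) hC.le
    -- a.e. equality φ = C * w
    have hIoomem : ∀ᵐ x ∂(volume.restrict (Set.Icc 0 t₀)), x ∈ Set.Ioo 0 t₀ := by
      have h0 : ∀ᵐ x ∂(volume : Measure ℝ), x ≠ 0 := by
        rw [ae_iff]
        have : {x : ℝ | ¬x ≠ 0} = {0} := by ext; simp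
        rw [this]; exact measure_singleton 0
      have ht' : ∀ᵐ x ∂(volume : Measure ℝ), x ≠ t₀ := by
        rw [ae_iff]
        have : {x : ℝ | ¬x ≠ t₀} = {t₀} := by ext; simp
        rw [this]; exact measure_singleton t₀
      filter_upwards [ae_restrict_of_ae h0, ae_restrict_of_ae ht',
        self_mem_ae_restrict measurableSet_Icc] with x hx0 hxt hxI
      exact ⟨lt_of_le_of_ne hxI.1 (Ne.symm hx0), lt_of_le_of_ne hxI.2 hxt⟩
    have hbd : ∀ᵐ x ∂(volume.restrict (Set.Icc 0 t₀)),
        x ∈ Set.Ioo 0 T → y' x ≤ C * (1 + h x) * y x :=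
      ae_restrict_of_ae ((ae_restrict_iff' measurableSet_Ioo).1 hbound)
    have haemax : ∀ᵐ x ∂(volume.restrict (Set.Icc 0 t₀)),
        φ x = C * ((1 + h x) / A x) := by
      filter_upwards [hIoomem, hbd] with x hx hbx
      have hxT : x ∈ Set.Ioo 0 T := ⟨hx.1, lt_of_lt_of_le hx.2 ht₀.2⟩
      have hb := hbx hxT
      have hyx0 : 0 ≤ y x := hynn x ⟨hx.1.le, hxT.2.le⟩
      have hApos : 0 < A x := lt_of_lt_of_le one_pos (hA1 x)
      have hhx : (0:ℝ) < 1 + h x := by linarith [hhnn x]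
      have hle : gder y y' x ≤ C * ((1 + h x) / A x) := by
        rcases lt_trichotomy (y x) 1 with hlt | heq | hgt
        · rw [gder, if_neg (by linarith), if_neg hlt.ne]
          positivity
        · rw [gder, if_neg (by rw [heq]; exact lt_irrefl 1), if_pos heq]
          have hAx : A x = 1 := by
            rw [hA]; simp only
            rw [heq, max_self, Real.log_one, add_zero]
          rw [hAx, div_one]
          rw [heq, mul_one] at hb
          exact max_le (by linarith) (by positivity)
        · rw [gder, if_pos hgt]
          have hyp : 0 < y x := lt_trans one_pos hgt
          have hlp : 0 < Real.log (y x) := Real.log_pos hgt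
          have hD : (0:ℝ) < 1 + Real.log (y x) := by linarith
          have hAx : A x = 1 + Real.log (y x) := by
            rw [hA]; simp only
            rw [max_eq_left hgt.le]
          rw [hAx, div_div, mul_div_assoc', div_le_div_iff₀ (by positivity) hD]
          nlinarith [mul_le_mul_of_nonneg_right hb hD.le]
      exact max_eq_right hle
    have hφint : IntegrableOn φ (Set.Icc 0 t₀) := hintCw.congr (haemax.mono fun x hx => hx.symm)
    have key : gfun y t₀ - gfun y 0 ≤ ∫ x in (0:ℝ)..t₀, φ x :=
      intervalIntegral.sub_le_integral_of_hasDeriv_right_of_le ht₀.1 hcont hderiv hφint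
        (fun x _ => le_max_left _ _)
    have e1 : ∫ x in (0:ℝ)..t₀, φ x = ∫ x in (0:ℝ)..t₀, C * ((1 + h x) / A x) := by
      apply intervalIntegral.integral_congr_ae
      have h2 := (ae_restrict_iff' measurableSet_Icc).1 haemax
      filter_upwards [h2] with x hx hxI
      refine hx ?_
      rw [Set.uIoc_of_le ht₀.1] at hxI
      exact ⟨hxI.1.le, hxI.2⟩
    have e2 : ∫ x in (0:ℝ)..t₀, C * ((1 + h x) / A x)
        = C * ∫ x in (0:ℝ)..t₀, (1 + h x) / A x :=
      intervalIntegral.integral_const_mul _ _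
    have e3 : ∫ x in (0:ℝ)..t₀, (1 + h x) / A x
        = ∫ s in (0:ℝ)..t₀, (1 + h s) / (1 + max (Real.log (y s)) 0) := by
      apply intervalIntegral.integral_congr
      intro s hs
      rw [Set.uIcc_of_le ht₀.1] at hs
      rw [hA]; simp only
      rw [lnplus_eq (hynn s (hsub hs))]
    have hg0 : gfun y 0 = Real.log (1 + max (Real.log (y 0)) 0) := rfl
    have hgt0 : gfun y t₀ = Real.log (1 + max (Real.log (y t₀)) 0) := rfl
    rw [e1, e2, e3] at key
    linarith [key]
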